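/- For every real x with 0 ≤ x ≤ π, sin(x) ≤ (4/π²) · x · (π − x). -/

import Mathlib

open Real

lemma aux_sin_lower (u : ℝ) (h0 : 0 ≤ u) (h1 : u ≤ π / 4) :
    2 * Real.sqrt 2 / π * u ≤ Real.sin u := by
  have hπ := Real.pi_pos
  have hb0 : 0 ≤ 4 * u / π := by positivity
  have hb1 : 4 * u / π ≤ 1 := by
    rw [div_le_one hπ]; linarith
  have ha0 : 0 ≤ 1 - 4 * u / π := by linarith
  have hcc := strictConcaveOn_sin_Icc.concaveOn.2
    (x := 0) (y := π / 4)
    ⟨le_refl 0, le_of_lt hπ⟩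
    ⟨by positivity, by linarith⟩
    ha0 hb0 (by ring)
  have hxu : (1 - 4 * u / π) • (0:ℝ) + (4 * u / π) • (π / 4) = u := by
    simp only [smul_eq_mul]; field_simp; ring
  rw [hxu, Real.sin_zero, Real.sin_pi_div_four, smul_eq_mul, smul_eq_mul] at hcc
  have heq : (1 - 4 * u / π) * (0:ℝ) + (4 * u / π) * (Real.sqrt 2 / 2)
      = 2 * Real.sqrt 2 / π * u := by
    field_simp; ring
  linarith [heq ▸ hcc]

lemma cos_key (t : ℝ) (h0 : 0 ≤ t) (h1 : t ≤ π / 2) :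
    Real.cos t ≤ 1 - 4 / π ^ 2 * t ^ 2 := by
  have hπ := Real.pi_pos
  have hu := aux_sin_lower (t / 2) (by linarith) (by linarith)
  have hsq : Real.sin (t / 2) ^ 2 = (1 - Real.cos t) / 2 := by
    have h1 := Real.cos_two_mul (t / 2)
    have h2 := Real.sin_sq_add_cos_sq (t / 2)
    have ht : (2:ℝ) * (t / 2) = t := by ring
    rw [ht] at h1
    linarith
  have hlhs : 0 ≤ 2 * Real.sqrt 2 / π * (t / 2) := by positivity
  have h2 : (2 * Real.sqrt 2 / π * (t / 2)) ^ 2 ≤ Real.sin (t / 2) ^ 2 := by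
    exact pow_le_pow_left₀ hlhs hu 2
  have hs2 : Real.sqrt 2 ^ 2 = 2 := Real.sq_sqrt (by norm_num)
  have hval : (2 * Real.sqrt 2 / π * (t / 2)) ^ 2 = Real.sqrt 2 ^ 2 * t ^ 2 / π ^ 2 := by
    ring
  rw [hs2] at hval
  rw [hval, hsq] at h2
  have hπ2 : (0:ℝ) < π ^ 2 := by positivity
  rw [div_le_div_iff₀ hπ2 (by norm_num : (0:ℝ) < 2)] at h2
  have h4 : 4 / π ^ 2 * t ^ 2 * π ^ 2 = 4 * t ^ 2 := by field_simp
  nlinarith [h2, h4, hπ2]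

theorem sin_le_quadratic (x : ℝ) (hx0 : 0 ≤ x) (hxπ : x ≤ π) :
    Real.sin x ≤ 4 / π ^ 2 * x * (π - x) := by
  have hπ := Real.pi_pos
  have hsin : Real.sin x = Real.cos (x - π / 2) := by
    rw [← Real.cos_pi_div_two_sub x, ← Real.cos_neg]; ring_nf
  have habs : |x - π / 2| ≤ π / 2 := abs_le.mpr ⟨by linarith, by linarith⟩
  have hkey := cos_key |x - π / 2| (abs_nonneg _) habs
  rw [sq_abs] at hkey
  have hcos : Real.cos (x - π / 2) = Real.cos |x - π / 2| := (Real.cos_abs _).symm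
  have heq : 1 - 4 / π ^ 2 * (x - π / 2) ^ 2 = 4 / π ^ 2 * x * (π - x) := by
    field_simp; ring
  rw [hsin, hcos]
  linarith [hkey, heq ▸ le_refl (1 - 4 / π ^ 2 * (x - π / 2) ^ 2)]
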